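/- arXiv:2310.10568 — 2 statements merged into one kernel-verified Lean document; each statement's English description precedes it below -/
import Mathlib

section
/- Let G be a group and let V and V' be nonzero finite-dimensional complex representations of G of dimensions 2g and 2g' respectively, each self-dual (isomorphic as a G-representation to its dual representation). Suppose that Hom_G(V, V') = 0 and that there exists an element z ∈ G acting as −identity on V and as −identity on V'. Then dim (V ⊗ V ⊗ V' ⊗ V')^G + 2g' · dim (V ⊗ V ⊗ V')^G − 2g · dim (V ⊗ V' ⊗ V')^G − 4gg' · dim (V ⊗ V')^G > 0; in fact this quantity equals dim (V ⊗ V ⊗ V' ⊗ V')^G, which is at least 1. -/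
open TensorProduct Module

section Aux

variable {G : Type*} [Group G]

/-- If some element acts as `-1`, invariants are trivial. -/
lemma aux_inv_bot {W : Type*} [AddCommGroup W] [Module ℂ W]
    (τ : Representation ℂ G W) (z : G) (hz : ∀ w, τ z w = -w) :
    τ.invariants = ⊥ := by
  rw [Submodule.eq_bot_iff]
  intro w hw
  have h1 : τ z w = w := hw z
  rw [hz w] at h1
  have h2 : (2 : ℂ) • w = 0 := by
    rw [two_smul]
    nth_rewrite 1 [← h1]
    exact neg_add_cancel w
  rcases smul_eq_zero.mp h2 with h | h
  · exact absurd h two_ne_zero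
  · exact h

lemma aux_tprod_neg_neg {W W' : Type*} [AddCommGroup W] [Module ℂ W]
    [AddCommGroup W'] [Module ℂ W']
    (τ : Representation ℂ G W) (τ' : Representation ℂ G W') (z : G)
    (h : ∀ w, τ z w = -w) (h' : ∀ w, τ' z w = -w) :
    ∀ x : W ⊗[ℂ] W', (τ.tprod τ') z x = x := by
  intro x
  rw [Representation.tprod_apply]
  induction x using TensorProduct.induction_on with
  | zero => simp
  | tmul a b => rw [TensorProduct.map_tmul, h, h', neg_tmul, tmul_neg, neg_neg]
  | add x y hx hy => rw [map_add, hx, hy]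

lemma aux_tprod_neg_pos {W W' : Type*} [AddCommGroup W] [Module ℂ W]
    [AddCommGroup W'] [Module ℂ W']
    (τ : Representation ℂ G W) (τ' : Representation ℂ G W') (z : G)
    (h : ∀ w, τ z w = -w) (h' : ∀ w, τ' z w = w) :
    ∀ x : W ⊗[ℂ] W', (τ.tprod τ') z x = -x := by
  intro x
  rw [Representation.tprod_apply]
  induction x using TensorProduct.induction_on with
  | zero => simp
  | tmul a b => rw [TensorProduct.map_tmul, h, h', neg_tmul]
  | add x y hx hy => rw [map_add, hx, hy, neg_add]

/-- Key equivariance computation for the map `V ⊗ V' → Hom(V, V')` induced by a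
self-duality `e` of `V`. -/
lemma aux_phi_equivariant {V V' : Type*} [AddCommGroup V] [Module ℂ V]
    [AddCommGroup V'] [Module ℂ V']
    (ρ : Representation ℂ G V) (ρ' : Representation ℂ G V')
    (e : V ≃ₗ[ℂ] Module.Dual ℂ V) (he : ∀ (σ : G) (v : V), e (ρ σ v) = ρ.dual σ (e v))
    (σ : G) (x : V ⊗[ℂ] V') (v : V) :
    dualTensorHom ℂ V V'
        (TensorProduct.map e.toLinearMap LinearMap.id (TensorProduct.map (ρ σ) (ρ' σ) x))
        (ρ σ v)
      = ρ' σ (dualTensorHom ℂ V V' (TensorProduct.map e.toLinearMap LinearMap.id x) v) := by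
  induction x using TensorProduct.induction_on with
  | zero => simp
  | tmul a b =>
      simp only [TensorProduct.map_tmul, dualTensorHom_apply, LinearMap.id_coe, id_eq,
        LinearEquiv.coe_coe]
      rw [he, Representation.dual_apply, Module.Dual.transpose_apply, LinearMap.comp_apply]
      have hv : ρ σ⁻¹ (ρ σ v) = v := by
        rw [← Module.End.mul_apply, ← map_mul, inv_mul_cancel, map_one, Module.End.one_apply]
      rw [hv, map_smul]
  | add x y hx hy => simp only [map_add, LinearMap.add_apply, hx, hy]

/-- A self-dual representation has a nonzero invariant tensor in `W ⊗ W`. -/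
lemma aux_exists_invariant {W : Type*} [AddCommGroup W] [Module ℂ W]
    [FiniteDimensional ℂ W] [Nontrivial W]
    (τ : Representation ℂ G W) (f : W ≃ₗ[ℂ] Module.Dual ℂ W)
    (hf : ∀ (σ : G) (w : W), f (τ σ w) = τ.dual σ (f w)) :
    ∃ t : W ⊗[ℂ] W, t ≠ 0 ∧ ∀ σ : G, TensorProduct.map (τ σ) (τ σ) t = t := by
  set Φ : W ⊗[ℂ] W ≃ₗ[ℂ] (W →ₗ[ℂ] W) :=
    (TensorProduct.congr f (LinearEquiv.refl ℂ W)).trans (dualTensorHomEquiv ℂ W W) with hΦdef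
  have hΦ : ∀ x : W ⊗[ℂ] W,
      Φ x = dualTensorHom ℂ W W (TensorProduct.map f.toLinearMap LinearMap.id x) := by
    intro x; rfl
  have hid : dualTensorHom ℂ W W (TensorProduct.map f.toLinearMap LinearMap.id
      (Φ.symm LinearMap.id)) = LinearMap.id := by
    rw [← hΦ, LinearEquiv.apply_symm_apply]
  refine ⟨Φ.symm LinearMap.id, ?_, ?_⟩
  · intro h
    have : (LinearMap.id : W →ₗ[ℂ] W) = 0 := by
      have := congrArg Φ h
      rwa [LinearEquiv.apply_symm_apply, map_zero] at this
    obtain ⟨w, hw⟩ := exists_ne (0 : W)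
    apply hw
    calc w = LinearMap.id w := rfl
    _ = (0 : W →ₗ[ℂ] W) w := by rw [this]
    _ = 0 := rfl
  · intro σ
    apply Φ.injective
    rw [hΦ, hΦ]
    apply LinearMap.ext
    intro w
    have hw : τ σ (τ σ⁻¹ w) = w := by
      rw [← Module.End.mul_apply, ← map_mul, mul_inv_cancel, map_one, Module.End.one_apply]
    rw [hid, LinearMap.id_apply]
    conv_lhs => rw [← hw]
    rw [aux_phi_equivariant τ τ f hf σ (Φ.symm LinearMap.id) (τ σ⁻¹ w), hid,
      LinearMap.id_apply, hw]

end Aux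

set_option synthInstance.maxHeartbeats 1000000 in
theorem trivial_multiplicity_pos
    {G : Type*} [Group G]
    {V V' : Type*} [AddCommGroup V] [Module ℂ V] [FiniteDimensional ℂ V]
    [AddCommGroup V'] [Module ℂ V'] [FiniteDimensional ℂ V']
    [Nontrivial V] [Nontrivial V']
    (g g' : ℕ)
    (hdim : Module.finrank ℂ V = 2 * g) (hdim' : Module.finrank ℂ V' = 2 * g')
    (ρ : Representation ℂ G V) (ρ' : Representation ℂ G V')
    (hsd : ∃ e : V ≃ₗ[ℂ] Module.Dual ℂ V, ∀ (σ : G) (v : V), e (ρ σ v) = ρ.dual σ (e v))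
    (hsd' : ∃ e : V' ≃ₗ[ℂ] Module.Dual ℂ V', ∀ (σ : G) (v : V'), e (ρ' σ v) = ρ'.dual σ (e v))
    (hhom : ∀ f : V →ₗ[ℂ] V', (∀ (σ : G) (v : V), f (ρ σ v) = ρ' σ (f v)) → f = 0)
    (z : G) (hz : ∀ v : V, ρ z v = -v) (hz' : ∀ v : V', ρ' z v = -v) :
    0 < (Module.finrank ℂ (((ρ.tprod ρ).tprod (ρ'.tprod ρ')).invariants) : ℤ)
          + 2 * g' * (Module.finrank ℂ ((ρ.tprod (ρ.tprod ρ')).invariants) : ℤ)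
          - 2 * g * (Module.finrank ℂ ((ρ.tprod (ρ'.tprod ρ')).invariants) : ℤ)
          - 4 * g * g' * (Module.finrank ℂ ((ρ.tprod ρ').invariants) : ℤ) ∧
      (Module.finrank ℂ (((ρ.tprod ρ).tprod (ρ'.tprod ρ')).invariants) : ℤ)
          + 2 * g' * (Module.finrank ℂ ((ρ.tprod (ρ.tprod ρ')).invariants) : ℤ)
          - 2 * g * (Module.finrank ℂ ((ρ.tprod (ρ'.tprod ρ')).invariants) : ℤ)
          - 4 * g * g' * (Module.finrank ℂ ((ρ.tprod ρ').invariants) : ℤ)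
        = (Module.finrank ℂ (((ρ.tprod ρ).tprod (ρ'.tprod ρ')).invariants) : ℤ) ∧
      1 ≤ Module.finrank ℂ (((ρ.tprod ρ).tprod (ρ'.tprod ρ')).invariants) := by
  obtain ⟨e, he⟩ := hsd
  obtain ⟨e', he'⟩ := hsd'
  -- the pair invariants vanish, by `hhom`
  have hpair : ((ρ.tprod ρ')).invariants = ⊥ := by
    rw [Submodule.eq_bot_iff]
    intro t ht
    have ht' : ∀ σ : G, TensorProduct.map (ρ σ) (ρ' σ) t = t := by
      intro σ
      rw [← Representation.tprod_apply]
      exact ht σ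
    have h0 : dualTensorHom ℂ V V' (TensorProduct.map e.toLinearMap LinearMap.id t) = 0 := by
      apply hhom
      intro σ v
      have := aux_phi_equivariant ρ ρ' e he σ t v
      rwa [ht' σ] at this
    -- injectivity of `dualTensorHom ∘ (e ⊗ id)`
    have hinj : Function.Injective
        ((dualTensorHom ℂ V V') ∘ₗ TensorProduct.map e.toLinearMap LinearMap.id) := by
      have h1 : Function.Injective (TensorProduct.map e.toLinearMap
          (LinearMap.id : V' →ₗ[ℂ] V')) := by
        have : (TensorProduct.congr e (LinearEquiv.refl ℂ V')).toLinearMap =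
            TensorProduct.map e.toLinearMap LinearMap.id := rfl
        rw [← this]
        exact (TensorProduct.congr e (LinearEquiv.refl ℂ V')).injective
      have h2 : Function.Injective (dualTensorHom ℂ V V') := by
        have : ⇑(dualTensorHom ℂ V V') = ⇑(dualTensorHomEquiv ℂ V V') := by
          funext x
          exact (dualTensorHomEquivOfBasis_apply (Module.Free.chooseBasis ℂ V) x).symm
        rw [this]
        exact (dualTensorHomEquiv ℂ V V').injective
      exact h2.comp h1
    have : ((dualTensorHom ℂ V V') ∘ₗ TensorProduct.map e.toLinearMap LinearMap.id) t =
        ((dualTensorHom ℂ V V') ∘ₗ TensorProduct.map e.toLinearMap LinearMap.id) 0 := by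
      simpa using h0
    exact hinj this
  -- triple tensor invariants vanish since z acts as -1
  have htriple1 : ((ρ.tprod (ρ.tprod ρ'))).invariants = ⊥ :=
    aux_inv_bot _ z (aux_tprod_neg_pos ρ (ρ.tprod ρ') z hz
      (aux_tprod_neg_neg ρ ρ' z hz hz'))
  have htriple2 : ((ρ.tprod (ρ'.tprod ρ'))).invariants = ⊥ :=
    aux_inv_bot _ z (aux_tprod_neg_pos ρ (ρ'.tprod ρ') z hz
      (aux_tprod_neg_neg ρ' ρ' z hz' hz'))
  -- construct a nonzero invariant in the quadruple tensor product
  have hquad : 1 ≤ Module.finrank ℂ (((ρ.tprod ρ).tprod (ρ'.tprod ρ')).invariants) := by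
    obtain ⟨t, ht0, htinv⟩ := aux_exists_invariant ρ e he
    obtain ⟨t', ht0', htinv'⟩ := aux_exists_invariant ρ' e' he'
    -- t ⊗ t' is a nonzero invariant
    set u : (V ⊗[ℂ] V) ⊗[ℂ] (V' ⊗[ℂ] V') := t ⊗ₜ[ℂ] t' with hu
    have humem : u ∈ (((ρ.tprod ρ).tprod (ρ'.tprod ρ'))).invariants := by
      rw [Representation.mem_invariants]
      intro σ
      rw [Representation.tprod_apply, hu, TensorProduct.map_tmul,
        Representation.tprod_apply, Representation.tprod_apply, htinv σ, htinv' σ]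
    have hune : u ≠ 0 := by
      obtain ⟨φ, hφ⟩ : ∃ φ : Module.Dual ℂ (V ⊗[ℂ] V), φ t ≠ 0 := by
        by_contra h
        push_neg at h
        exact ht0 ((Module.forall_dual_apply_eq_zero_iff ℂ t).mp h)
      obtain ⟨ψ, hψ⟩ : ∃ ψ : Module.Dual ℂ (V' ⊗[ℂ] V'), ψ t' ≠ 0 := by
        by_contra h
        push_neg at h
        exact ht0' ((Module.forall_dual_apply_eq_zero_iff ℂ t').mp h)
      intro h
      have : ((TensorProduct.lid ℂ ℂ).toLinearMap ∘ₗ TensorProduct.map φ ψ) u = 0 := by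
        rw [h, map_zero]
      rw [hu] at this
      simp only [LinearMap.comp_apply, TensorProduct.map_tmul, LinearEquiv.coe_coe,
        TensorProduct.lid_tmul, smul_eq_mul] at this
      exact hφ (by
        rcases mul_eq_zero.mp this with h1 | h1
        · exact h1
        · exact absurd h1 hψ)
    haveI : Nontrivial (((ρ.tprod ρ).tprod (ρ'.tprod ρ'))).invariants := by
      refine nontrivial_of_ne ⟨u, humem⟩ 0 ?_
      intro h
      apply hune
      exact congrArg Subtype.val h
    have := Module.finrank_pos (R := ℂ)
      (M := (((ρ.tprod ρ).tprod (ρ'.tprod ρ'))).invariants)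
    omega
  refine ⟨?_, ?_, hquad⟩
  · rw [hpair, htriple1, htriple2]
    simp only [finrank_bot]
    push_cast
    have : (1 : ℤ) ≤ (Module.finrank ℂ (((ρ.tprod ρ).tprod (ρ'.tprod ρ')).invariants) : ℤ) := by
      exact_mod_cast hquad
    linarith
  · rw [hpair, htriple1, htriple2]
    simp only [finrank_bot]
    push_cast
    ring
end

section
/- Let a be a real number with 0 < a < 1 and let y be a real number with y ≥ 1. Then (1/(2π)) ∫_{t ∈ ℝ} y^{2 + it} / (2 + a + it)² dt = y^{−a} · log y, where y^{s} denotes exp(s · log y) for s ∈ ℂ. -/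
open MeasureTheory Complex Filter Real Set Topology FourierTransform RealInnerProductSpace

lemma aux_tendsto_mul_exp (r : ℝ) (hr : 0 < r) :
    Tendsto (fun x : ℝ => x * Real.exp (-(r * x))) atTop (𝓝 0) := by
  have h := (tendsto_pow_mul_exp_neg_atTop_nhds_zero 1).comp
    (tendsto_id.const_mul_atTop hr)
  have h2 := h.const_mul (1 / r)
  rw [mul_zero] at h2
  refine h2.congr fun x => ?_
  simp only [Function.comp, pow_one, id]
  field_simp

lemma aux_integrableOn (z : ℂ) (hz : 0 < z.re) :
    IntegrableOn (fun x : ℝ => (x : ℂ) * Complex.exp (-(z * x))) (Ioi 0) := by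
  have hb : IntegrableOn (fun x : ℝ => x ^ (1:ℝ) * Real.exp (-z.re * x ^ (1:ℝ))) (Ioi 0) :=
    integrableOn_rpow_mul_exp_neg_mul_rpow (by norm_num) (by norm_num) hz
  refine Integrable.mono' (hb.congr_fun (fun x hx => by beta_reduce; rw [Real.rpow_one]) measurableSet_Ioi)
    ?_ ?_
  · exact (Complex.continuous_ofReal.mul
      (Complex.continuous_exp.comp (by continuity))).aestronglyMeasurable.restrict
  · filter_upwards [ae_restrict_mem measurableSet_Ioi] with x hx
    rw [norm_mul, Complex.norm_exp,
      Complex.norm_real, Real.norm_eq_abs, abs_of_pos hx]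
    have : (-(z * (x:ℂ))).re = -z.re * x := by simp [mul_comm]
    rw [this]

lemma aux_integral (z : ℂ) (hz : 0 < z.re) :
    ∫ x in Ioi (0:ℝ), (x : ℂ) * Complex.exp (-(z * x)) = 1 / z ^ 2 := by
  have hz0 : z ≠ 0 := fun h => by simp [h] at hz
  set F : ℝ → ℂ := fun x => -((x : ℂ) / z + 1 / z ^ 2) * Complex.exp (-(z * x)) with hF
  have hderiv : ∀ x ∈ Ici (0:ℝ), HasDerivAt F ((x : ℂ) * Complex.exp (-(z * x))) x := by
    intro x _
    have h1 : HasDerivAt (fun x : ℝ => (x : ℂ)) 1 x := hasDerivAt_id x |>.ofReal_comp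
    have h2 : HasDerivAt (fun x : ℝ => Complex.exp (-(z * x)))
        (-z * Complex.exp (-(z * x))) x := by
      have := ((h1.const_mul z).neg).cexp
      simpa [mul_comm] using this
    have h3 : HasDerivAt (fun x : ℝ => -((x : ℂ) / z + 1 / z ^ 2)) (-(1 / z)) x :=
      ((h1.div_const z).add_const _).neg
    have := h3.mul h2
    convert this using 1
    · rfl
    · rfl
    have hzw : z * z⁻¹ = 1 := mul_inv_cancel₀ hz0
    linear_combination (-((x:ℂ) * Complex.exp (-(z * x)) + (1/z) * Complex.exp (-(z * x)))) * hzw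
  have htend : Tendsto F atTop (𝓝 0) := by
    refine squeeze_zero_norm' (a := fun x : ℝ =>
      ‖1/z‖ * (x * Real.exp (-(z.re * x))) + ‖1/z^2‖ * Real.exp (-(z.re * x))) ?_ ?_
    · filter_upwards [eventually_ge_atTop (0:ℝ)] with x hx
      rw [hF]
      have hre : (-(z * (x:ℂ))).re = -(z.re * x) := by simp
      rw [norm_mul, Complex.norm_exp, hre, norm_neg]
      have : ‖(x : ℂ) / z + 1 / z ^ 2‖ ≤ ‖1/z‖ * x + ‖1/z^2‖ := by
        refine (norm_add_le _ _).trans ?_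
        gcongr
        rw [div_eq_mul_inv, ← one_div, mul_comm, norm_mul, Complex.norm_real,
          Real.norm_eq_abs, _root_.abs_of_nonneg hx]
      calc ‖(x : ℂ) / z + 1 / z ^ 2‖ * Real.exp (-(z.re * x))
          ≤ (‖1/z‖ * x + ‖1/z^2‖) * Real.exp (-(z.re * x)) := by
            gcongr
        _ = _ := by ring
    · have he : Tendsto (fun x : ℝ => Real.exp (-(z.re * x))) atTop (𝓝 0) :=
        tendsto_exp_neg_atTop_nhds_zero.comp (tendsto_id.const_mul_atTop hz)
      have h1 := (aux_tendsto_mul_exp z.re hz).const_mul ‖1/z‖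
      have h2 := he.const_mul ‖1/z^2‖
      simpa using h1.add h2
  have hcont : ContinuousWithinAt F (Ici 0) 0 :=
    (Continuous.continuousAt (by fun_prop)).continuousWithinAt
  have := integral_Ioi_of_hasDerivAt_of_tendsto hcont (fun x hx => hderiv x (Set.mem_Ici.mpr (le_of_lt (Set.mem_Ioi.mp hx)))) (aux_integrableOn z hz) htend
  rw [this, hF]
  simp

noncomputable def auxF (c : ℝ) : ℝ → ℂ :=
  fun x => ((max x 0 : ℝ) : ℂ) * Complex.exp (-((c : ℂ) * x))

lemma auxF_eq_indicator (c : ℝ) :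
    auxF c = Set.indicator (Ioi 0) (fun x : ℝ => (x : ℂ) * Complex.exp (-((c:ℂ) * x))) := by
  funext x
  rcases le_or_gt x 0 with hx | hx
  · rw [Set.indicator_of_notMem (by simpa using hx)]
    simp [auxF, max_eq_right hx]
  · rw [Set.indicator_of_mem (show x ∈ Ioi 0 from hx)]
    simp [auxF, max_eq_left hx.le]

lemma auxF_cont (c : ℝ) : Continuous (auxF c) := by
  unfold auxF
  fun_prop

lemma auxF_integrable (c : ℝ) (hc : 0 < c) : Integrable (auxF c) := by
  rw [auxF_eq_indicator, integrable_indicator_iff measurableSet_Ioi]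
  exact aux_integrableOn c (by simpa using hc)

lemma auxF_fourier (c : ℝ) (hc : 0 < c) (ξ : ℝ) :
    𝓕 (auxF c) ξ = 1 / ((c : ℂ) + (2 * π * ξ) * Complex.I) ^ 2 := by
  rw [Real.fourier_eq']
  have h1 : (fun v : ℝ => Complex.exp ((↑(-2 * π * (inner ℝ v ξ : ℝ)) * Complex.I)) • auxF c v)
      = Set.indicator (Ioi 0)
        (fun v : ℝ => (v : ℂ) * Complex.exp (-((((c:ℂ) + (2 * π * ξ) * Complex.I)) * v))) := by
    rw [auxF_eq_indicator]
    funext v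
    rcases le_or_gt v 0 with hv | hv
    · rw [Set.indicator_of_notMem (by simpa using hv), Set.indicator_of_notMem (by simpa using hv)]
      simp
    · rw [Set.indicator_of_mem (show v ∈ Ioi 0 from hv), Set.indicator_of_mem (show v ∈ Ioi 0 from hv)]
      rw [smul_eq_mul]
      rw [← mul_assoc, mul_comm (Complex.exp _) ((v:ℂ)), mul_assoc, ← Complex.exp_add]
      congr 2
      simp only [RCLike.inner_apply, starRingEnd_apply, star_trivial]
      push_cast
      ring
  rw [h1, integral_indicator measurableSet_Ioi]
  exact aux_integral _ (by simp [hc])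

lemma auxF_fourier_integrable (c : ℝ) (hc : 1 ≤ c) : Integrable (𝓕 (auxF c)) := by
  have hc0 : 0 < c := lt_of_lt_of_le one_pos hc
  have heq : 𝓕 (auxF c) = fun ξ : ℝ => 1 / ((c : ℂ) + (2 * π * ξ) * Complex.I) ^ 2 :=
    funext (auxF_fourier c hc0)
  rw [heq]
  have hne : ∀ ξ : ℝ, ((c : ℂ) + (2 * π * ξ) * Complex.I) ≠ 0 := by
    intro ξ h
    have : ((c : ℂ) + (2 * π * ξ) * Complex.I).re = c := by simp
    rw [h] at this
    simp at this
    exact (ne_of_gt hc0) this.symm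
  refine Integrable.mono' (g := fun ξ : ℝ => (1 + ξ ^ 2)⁻¹) integrable_inv_one_add_sq ?_ ?_
  · refine (Continuous.div continuous_const ?_ ?_).aestronglyMeasurable
    · fun_prop
    · exact fun ξ => pow_ne_zero _ (hne ξ)
  · refine Eventually.of_forall fun ξ => ?_
    rw [norm_div, norm_one, norm_pow]
    have habs : ‖(c : ℂ) + (2 * π * ξ) * Complex.I‖ ^ 2 = c ^ 2 + (2 * π * ξ) ^ 2 := by
      rw [Complex.sq_norm, Complex.normSq_apply]
      have h1 : ((c : ℂ) + (2 * π * ξ) * Complex.I).re = c := by simp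
      have h2 : ((c : ℂ) + (2 * π * ξ) * Complex.I).im = 2 * π * ξ := by simp
      rw [h1, h2]; ring
    rw [habs, one_div]
    have hπ : 3 < π := Real.pi_gt_three
    rw [inv_le_inv₀ (by positivity) (by positivity)]
    have h9 : 9 ≤ π ^ 2 := by nlinarith
    nlinarith [sq_nonneg ξ, sq_nonneg (c - 1),
      mul_le_mul_of_nonneg_right h9 (sq_nonneg ξ)]

lemma aux_inversion (c L : ℝ) (hc : 1 ≤ c) (hL : 0 ≤ L) :
    ∫ ξ : ℝ, Complex.exp ((↑(2 * π * (ξ * L)) : ℂ) * Complex.I) *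
        (1 / ((c : ℂ) + (2 * π * ξ) * Complex.I) ^ 2)
      = (L : ℂ) * Complex.exp (-((c : ℂ) * L)) := by
  have hc0 : 0 < c := lt_of_lt_of_le one_pos hc
  have hinv := (auxF_cont c).fourierInv_fourier_eq (auxF_integrable c hc0)
    (auxF_fourier_integrable c hc)
  have h2 := congrFun hinv L
  rw [Real.fourierInv_eq'] at h2
  have h3 : (fun v : ℝ => Complex.exp ((↑(2 * π * (inner ℝ v L : ℝ)) : ℂ) * Complex.I) • 𝓕 (auxF c) v)
      = fun ξ : ℝ => Complex.exp ((↑(2 * π * (ξ * L)) : ℂ) * Complex.I) *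
        (1 / ((c : ℂ) + (2 * π * ξ) * Complex.I) ^ 2) := by
    funext ξ
    rw [auxF_fourier c hc0, smul_eq_mul]
    simp [RCLike.inner_apply]
    left; ring_nf
  rw [h3] at h2
  rw [h2]
  simp [auxF, max_eq_left hL]

theorem bach_kernel_ge_one (a y : ℝ) (ha0 : 0 < a) (ha1 : a < 1) (hy : 1 ≤ y) :
    (1 / (2 * Real.pi) : ℂ) *
        ∫ t : ℝ, Complex.exp ((2 + t * Complex.I) * (Real.log y : ℂ)) /
          ((2 : ℂ) + (a : ℂ) + t * Complex.I) ^ 2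
      = ((y ^ (-a) * Real.log y : ℝ) : ℂ) := by
  set L : ℝ := Real.log y with hLdef
  have hL : 0 ≤ L := Real.log_nonneg hy
  set c : ℝ := 2 + a with hcdef
  have hc : 1 ≤ c := by simp [hcdef]; linarith
  set g : ℝ → ℂ := fun t => Complex.exp ((2 + t * Complex.I) * (L : ℂ)) /
      ((2 : ℂ) + (a : ℂ) + t * Complex.I) ^ 2 with hg
  have hcomp := MeasureTheory.Measure.integral_comp_mul_left g (2 * π)
  -- hcomp : ∫ ξ, g (2π * ξ) = |(2π)⁻¹| • ∫ t, g t
  have h2π : (0:ℝ) < 2 * π := by positivity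
  have habs : |(2 * π)⁻¹| = (2 * π)⁻¹ := abs_of_pos (by positivity)
  rw [habs] at hcomp
  have hval : ∀ ξ : ℝ, g (2 * π * ξ) =
      Complex.exp (2 * (L : ℂ)) * (Complex.exp ((↑(2 * π * (ξ * L)) : ℂ) * Complex.I) *
        (1 / ((c : ℂ) + (2 * π * ξ) * Complex.I) ^ 2)) := by
    intro ξ
    rw [hg]
    simp only []
    rw [div_eq_mul_one_div]
    have hd : ((2 : ℂ) + (a : ℂ) + ((2 * π * ξ : ℝ) : ℂ) * Complex.I) ^ 2
        = ((c : ℂ) + (2 * π * ξ) * Complex.I) ^ 2 := by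
      push_cast [hcdef]; ring_nf
    have hexp : Complex.exp ((2 + ((2 * π * ξ : ℝ) : ℂ) * Complex.I) * (L : ℂ))
        = Complex.exp (2 * (L : ℂ)) * Complex.exp ((↑(2 * π * (ξ * L)) : ℂ) * Complex.I) := by
      rw [← Complex.exp_add]
      congr 1
      push_cast
      ring
    rw [hd, hexp]
    ring
  have hint : ∫ ξ : ℝ, g (2 * π * ξ) = Complex.exp (2 * (L : ℂ)) *
      ((L : ℂ) * Complex.exp (-((c : ℂ) * L))) := by
    simp_rw [hval]
    rw [integral_const_mul, aux_inversion c L hc hL]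
  rw [hint] at hcomp
  have hIg : ∫ t : ℝ, g t = (2 * π : ℝ) • (Complex.exp (2 * (L : ℂ)) *
      ((L : ℂ) * Complex.exp (-((c : ℂ) * L)))) := by
    rw [hcomp, smul_smul, mul_inv_cancel₀ (ne_of_gt h2π), one_smul]
  rw [hIg]
  rw [real_smul]
  have hrw : y ^ (-a) = Real.exp (-(a * L)) := by
    rw [Real.rpow_def_of_pos (lt_of_lt_of_le one_pos hy), hLdef]
    ring_nf
  rw [hrw]
  push_cast [hcdef]
  have hπ0 : (π : ℂ) ≠ 0 := Complex.ofReal_ne_zero.mpr Real.pi_ne_zero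
  have hee : Complex.exp (2 * (L : ℂ)) * Complex.exp (-((2 + (a : ℂ)) * L))
      = Complex.exp (-((a : ℂ) * L)) := by
    rw [← Complex.exp_add]; congr 1; ring
  rw [show (1 / (2 * (π : ℂ))) * (2 * (π : ℂ) * (Complex.exp (2 * (L : ℂ)) *
      ((L : ℂ) * Complex.exp (-((2 + (a : ℂ)) * (L : ℂ))))))
      = (Complex.exp (2 * (L : ℂ)) * Complex.exp (-((2 + (a : ℂ)) * (L : ℂ)))) * L from by
    field_simp, hee]
end
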